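/- Let d ≥ 1, K > 20, and let g_m : ℝ^d → ℝ^d (defined on the set of points x with 0 < dist(x, ℓ) < K, where ℓ = {0}^{d−1} × ℝ) be given by g_m(x) = (mε/(10K))·x^K_− + (1 − mε/(10K))·x, where x^K_− is the lower point of ℓ at distance K from x and 1 ≤ m ≤ ⌈100/ε⌉ with mε/10 ≤ 20. Then the absolute value of the Jacobian determinant of g_m at x equals ((K − mε/10)/K)^{d−1}, and hence the inverse map g_m^{-1} has Jacobian determinant of absolute value (K/(K − mε/10))^{d−1} < (K/(K−20))^{d−1}. -/

import Mathlib

open Matrix in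
lemma det_shear {E : Type*} [NormedAddCommGroup E] [NormedSpace ℝ E]
    [FiniteDimensional ℝ E] (c : ℝ) (ψ : E →ₗ[ℝ] ℝ)
    (L : (E × ℝ) →ₗ[ℝ] (E × ℝ))
    (hL : ∀ p : E × ℝ, L p = (c • p.1, p.2 + ψ p.1)) :
    LinearMap.det L = c ^ (Module.finrank ℝ E) := by
  classical
  let bE := Module.finBasis ℝ E
  let bR : Module.Basis Unit ℝ ℝ := Module.Basis.singleton Unit ℝ
  let b := bE.prod bR
  rw [← LinearMap.det_toMatrix b]
  have hM : LinearMap.toMatrix b b L =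
      Matrix.fromBlocks (c • (1 : Matrix (Fin (Module.finrank ℝ E)) (Fin (Module.finrank ℝ E)) ℝ))
        0 (Matrix.of fun _ j => ψ (bE j)) 1 := by
    ext i j
    rcases i with i | i <;> rcases j with j | j <;>
      simp [LinearMap.toMatrix_apply, b, hL, Module.Basis.prod_apply, bR, Matrix.one_apply,
        Finsupp.single_apply, eq_comm]
  rw [hM, Matrix.det_fromBlocks_zero₁₂, Matrix.det_one, mul_one, Matrix.det_smul,
    Matrix.det_one, mul_one]
  simp

lemma hasFDerivAt_move (n : ℕ) (c a : ℝ) (K : ℝ) (x : (EuclideanSpace ℝ (Fin n)) × ℝ)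
    (hpos : 0 < K ^ 2 - ‖x.1‖ ^ 2) :
    ∃ N : (EuclideanSpace ℝ (Fin n)) × ℝ →L[ℝ] ℝ, (∀ v : ℝ, N (0, v) = 0) ∧
    HasFDerivAt (fun z : (EuclideanSpace ℝ (Fin n)) × ℝ =>
        ((c • z.1 : EuclideanSpace ℝ (Fin n)),
          z.2 - a * Real.sqrt (K ^ 2 - ‖z.1‖ ^ 2)) )
      ((c • ContinuousLinearMap.fst ℝ (EuclideanSpace ℝ (Fin n)) ℝ).prod
        (ContinuousLinearMap.snd ℝ (EuclideanSpace ℝ (Fin n)) ℝ - N)) x := by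
  have hn : HasFDerivAt (fun z : (EuclideanSpace ℝ (Fin n)) × ℝ => ‖z.1‖ ^ 2)
      (2 • (innerSL ℝ x.1).comp (ContinuousLinearMap.fst ℝ _ ℝ)) x :=
    (hasFDerivAt_fst).norm_sq
  have hq := hn.const_sub (K ^ 2)
  have hs : HasDerivAt Real.sqrt (1 / (2 * Real.sqrt (K ^ 2 - ‖x.1‖ ^ 2)))
      (K ^ 2 - ‖x.1‖ ^ 2) := Real.hasDerivAt_sqrt (ne_of_gt hpos)
  have hsq : HasFDerivAt (fun z : (EuclideanSpace ℝ (Fin n)) × ℝ =>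
      Real.sqrt (K ^ 2 - ‖z.1‖ ^ 2)) _ x := hs.comp_hasFDerivAt x hq
  have h2 := (hasFDerivAt_snd (𝕜 := ℝ) (E := EuclideanSpace ℝ (Fin n)) (F := ℝ) (p := x)).sub
    (hsq.const_mul a)
  have h1 : HasFDerivAt (fun z : (EuclideanSpace ℝ (Fin n)) × ℝ =>
      (c • z.1 : EuclideanSpace ℝ (Fin n)))
      (c • ContinuousLinearMap.fst ℝ (EuclideanSpace ℝ (Fin n)) ℝ) x :=
    (c • ContinuousLinearMap.fst ℝ (EuclideanSpace ℝ (Fin n)) ℝ).hasFDerivAt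
  refine ⟨_, fun v => ?_, HasFDerivAt.prodMk h1 h2⟩
  simp

/-- Jacobian of an elementary move. Represent `ℝ^d` (`d ≥ 1`) as
`ℝ^{d-1} × ℝ` (horizontal × vertical), with axis `ℓ = {0} × ℝ`. For a point
`z = (h, v)` with `0 < ‖h‖ < K`, the lower point of `ℓ` at distance `K` from `z` is
`z^K_- = (0, v - √(K² - ‖h‖²))`, and the elementary move of magnitude `m` is
`g_m z = (mε/(10K))·z^K_- + (1 - mε/(10K))·z
       = (((K - mε/10)/K)·h, v - (mε/(10K))·√(K² - ‖h‖²))`.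
Its Jacobian determinant has absolute value `((K - mε/10)/K)^{d-1}`; hence the inverse
map has Jacobian of absolute value `(K/(K - mε/10))^{d-1} < (K/(K-20))^{d-1}`. -/
theorem stmt_8 (d : ℕ) (hd : 1 ≤ d) (ε K : ℝ) (hε : 0 < ε) (hε1 : ε < 1)
    (hK : 20 < K) (m : ℕ) (hm1 : 1 ≤ m) (hm2 : m ≤ ⌈(100 : ℝ) / ε⌉₊)
    (hm3 : (m : ℝ) * ε / 10 ≤ 20)
    (x : (EuclideanSpace ℝ (Fin (d - 1))) × ℝ)
    (hx0 : 0 < ‖x.1‖) (hxK : ‖x.1‖ < K) :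
    |(fderiv ℝ (fun z : (EuclideanSpace ℝ (Fin (d - 1))) × ℝ =>
        ((((K - (m : ℝ) * ε / 10) / K) • z.1 : EuclideanSpace ℝ (Fin (d - 1))),
          z.2 - ((m : ℝ) * ε / (10 * K)) * Real.sqrt (K ^ 2 - ‖z.1‖ ^ 2))) x).det|
        = ((K - (m : ℝ) * ε / 10) / K) ^ (d - 1)
      ∧ (K / (K - (m : ℝ) * ε / 10)) ^ (d - 1) < (K / (K - 20)) ^ (d - 1) := by
  have hK0 : (0 : ℝ) < K := by linarith
  -- strict bound m ε / 10 < 20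
  have hmlt : (m : ℝ) * ε / 10 < 20 := by
    have h1 : (m : ℝ) ≤ (⌈(100 : ℝ) / ε⌉₊ : ℝ) := Nat.cast_le.mpr hm2
    have h2 : (⌈(100 : ℝ) / ε⌉₊ : ℝ) < 100 / ε + 1 :=
      Nat.ceil_lt_add_one (by positivity)
    have h3 : (1 : ℝ) < 100 / ε := by
      rw [lt_div_iff₀ hε]; linarith
    have h4 : (m : ℝ) < 200 / ε := by
      have : (100 : ℝ) / ε + 1 < 200 / ε := by
        rw [div_add' _ _ _ (ne_of_gt hε), div_lt_div_iff₀ hε hε]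
        nlinarith
      linarith
    have h5 : (m : ℝ) * ε < 200 := by
      calc (m : ℝ) * ε < (200 / ε) * ε := by
            exact mul_lt_mul_of_pos_right h4 hε
        _ = 200 := by field_simp
    linarith
  have hc0 : (0 : ℝ) < (K - (m : ℝ) * ε / 10) / K := by
    apply div_pos; linarith; exact hK0
  -- d - 1 ≥ 1 since x.1 ≠ 0
  have hd1 : d - 1 ≠ 0 := by
    intro h
    haveI : IsEmpty (Fin (d - 1)) := by rw [h]; infer_instance
    have : x.1 = 0 := Subsingleton.elim _ _
    rw [this, norm_zero] at hx0
    exact lt_irrefl _ hx0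
  have hpos : 0 < K ^ 2 - ‖x.1‖ ^ 2 := by
    have : ‖x.1‖ ^ 2 < K ^ 2 := by nlinarith [norm_nonneg x.1]
    linarith
  obtain ⟨N, hN0, hF⟩ := hasFDerivAt_move (d - 1) ((K - (m : ℝ) * ε / 10) / K)
    ((m : ℝ) * ε / (10 * K)) K x hpos
  constructor
  · rw [hF.fderiv]
    set c : ℝ := (K - (m : ℝ) * ε / 10) / K
    set L := (c • ContinuousLinearMap.fst ℝ (EuclideanSpace ℝ (Fin (d - 1))) ℝ).prod
      (ContinuousLinearMap.snd ℝ (EuclideanSpace ℝ (Fin (d - 1))) ℝ - N)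
    have hdet : LinearMap.det (L : (EuclideanSpace ℝ (Fin (d - 1))) × ℝ →ₗ[ℝ]
        (EuclideanSpace ℝ (Fin (d - 1))) × ℝ) = c ^ (d - 1) := by
      have := det_shear c
        (((ContinuousLinearMap.snd ℝ (EuclideanSpace ℝ (Fin (d - 1))) ℝ - N) :
            (EuclideanSpace ℝ (Fin (d - 1))) × ℝ →ₗ[ℝ] ℝ).comp
          (LinearMap.inl ℝ (EuclideanSpace ℝ (Fin (d - 1))) ℝ))
        (L : (EuclideanSpace ℝ (Fin (d - 1))) × ℝ →ₗ[ℝ] (EuclideanSpace ℝ (Fin (d - 1))) × ℝ)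
        ?_
      · rwa [finrank_euclideanSpace_fin] at this
      · rintro ⟨h, v⟩
        have hsplit : N (h, v) = N (h, 0) + N (0, v) := by
          rw [← map_add]; norm_num
        simp [L, hsplit, hN0 v]
        ring
    rw [ContinuousLinearMap.det, hdet, abs_of_nonneg (by positivity)]
  · have hden : (0:ℝ) < K - (m : ℝ) * ε / 10 := by linarith
    apply pow_lt_pow_left₀ _ (le_of_lt (div_pos hK0 hden)) hd1
    rw [div_lt_div_iff₀ (by linarith) (by linarith)]
    nlinarith
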